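/- (Lemma 4.13 i), bound for p = 2.) Let p = 2, and let f ∈ k[X] with f(0) = 0, m := deg f odd, m ≥ 2, and genus (m−1)/2 > 1. Write m − 1 = ℓ·2^s with ℓ odd and s = v_2(m−1) ≥ 1, and assume ℓ > 1. Then |S(f)| ≤ 2^{s−1}; equivalently, |G_{∞,1}(f)| ≤ 2^s. -/

import Mathlib

open Polynomial

/-- `S(f)`: the set of `y ∈ k` such that `f(X+y) - f(X) - f(y) = P(X) - P(X)^p`
for some polynomial `P` with `P(0) = 0`. -/
def Sf (p : ℕ) {k : Type*} [Field k] (f : k[X]) : Set k :=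
  {y | ∃ P : k[X], P.coeff 0 = 0 ∧
    f.comp (X + C y) - f - C (f.eval y) = P - P ^ p}

private lemma lucas2 (n r : ℕ) :
    Nat.choose n r ≡ Nat.choose (n % 2) (r % 2) * Nat.choose (n / 2) (r / 2) [MOD 2] := by
  haveI : Fact (Nat.Prime 2) := ⟨Nat.prime_two⟩
  exact Choose.choose_modEq_choose_mod_mul_choose_div_nat

private lemma two_dvd_choose_of_even_odd {n r : ℕ} (hn : n % 2 = 0) (hr : r % 2 = 1) :
    2 ∣ Nat.choose n r := by
  have h := lucas2 n r
  rw [hn, hr] at h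
  refine Nat.dvd_of_mod_eq_zero ?_
  simpa [Nat.ModEq, Nat.choose] using h

private lemma odd_choose_pow {ℓ : ℕ} (hl : Odd ℓ) : ∀ i : ℕ, (ℓ * 2 ^ i).choose (2 ^ i) % 2 = 1 := by
  intro i
  induction i with
  | zero =>
    simpa [Nat.choose_one_right] using Nat.odd_iff.mp hl
  | succ i ih =>
    have h := lucas2 (ℓ * 2 ^ (i + 1)) (2 ^ (i + 1))
    have h1 : ℓ * 2 ^ (i + 1) % 2 = 0 := by
      simp [pow_succ, ← mul_assoc, Nat.mul_mod_left]
    have h2 : 2 ^ (i + 1) % 2 = 0 := by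
      simp [pow_succ, Nat.mul_mod_left]
    have h3 : ℓ * 2 ^ (i + 1) / 2 = ℓ * 2 ^ i := by
      rw [pow_succ, ← mul_assoc]; exact Nat.mul_div_cancel _ two_pos
    have h4 : 2 ^ (i + 1) / 2 = 2 ^ i := by
      rw [pow_succ]; exact Nat.mul_div_cancel _ two_pos
    rw [h1, h2, h3, h4] at h
    simpa [Nat.ModEq, ih] using h

private lemma odd_choose_main {ℓ s : ℕ} (hs : 1 ≤ s) (hl : Odd ℓ) :
    (1 + ℓ * 2 ^ s).choose (2 ^ s) % 2 = 1 := by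
  obtain ⟨t, rfl⟩ := Nat.exists_eq_add_of_le hs
  have h := lucas2 (1 + ℓ * 2 ^ (1 + t)) (2 ^ (1 + t))
  have h1 : (1 + ℓ * 2 ^ (1 + t)) % 2 = 1 := by
    have e : 1 + ℓ * 2 ^ (1 + t) = 1 + (ℓ * 2 ^ t) * 2 := by ring
    rw [e, Nat.add_mul_mod_self_right]
  have h2 : 2 ^ (1 + t) % 2 = 0 := by
    simp [pow_add, Nat.mul_mod_right]
  have h3 : (1 + ℓ * 2 ^ (1 + t)) / 2 = ℓ * 2 ^ t := by
    have : 1 + ℓ * 2 ^ (1 + t) = 1 + (ℓ * 2 ^ t) * 2 := by ring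
    rw [this, Nat.add_mul_div_right _ _ two_pos]
    simp
  have h4 : 2 ^ (1 + t) / 2 = 2 ^ t := by
    have : (2:ℕ) ^ (1 + t) = 2 ^ t * 2 := by ring
    rw [this, Nat.mul_div_cancel _ two_pos]
  rw [h1, h2, h3, h4] at h
  simpa [Nat.ModEq, odd_choose_pow hl t] using h

theorem card_Sf_le_char_two (k : Type*) [Field k] [IsAlgClosed k] [CharP k 2]
    (f : k[X]) (hf0 : f.coeff 0 = 0) (m : ℕ) (hm : f.natDegree = m)
    (hodd : Odd m) (hm2 : 2 ≤ m) (hg : 2 < m - 1)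
    (ℓ s : ℕ) (hs : 1 ≤ s) (hℓodd : Odd ℓ) (hℓ : 1 < ℓ)
    (hml : m - 1 = ℓ * 2 ^ s) :
    (Sf 2 f).Finite ∧ (Sf 2 f).ncard ≤ 2 ^ (s - 1) := by
  haveI : Fact (Nat.Prime 2) := ⟨Nat.prime_two⟩
  haveI : ExpChar k 2 := ExpChar.prime Nat.prime_two
  classical
  -- abbreviations
  set A : ℕ := 2 ^ s with hA
  set B : ℕ := 2 ^ (s - 1) with hB
  have hAB : A = 2 * B := by
    rw [hA, hB, ← pow_succ']
    congr 1
    omega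
  have hBpos : 0 < B := Nat.pow_pos two_pos
  have hApos : 0 < A := Nat.pow_pos two_pos
  have hm1 : m = ℓ * A + 1 := by omega
  set j : ℕ := (ℓ - 1) * A + 1 with hj
  have hjm : j + A = m := by
    have h1 : (ℓ - 1) * A + A = ℓ * A := by
      have : ℓ - 1 + 1 = ℓ := by omega
      calc (ℓ - 1) * A + A = (ℓ - 1 + 1) * A := by ring
        _ = ℓ * A := by rw [this]
    omega
  have hjodd : j % 2 = 1 := by
    have : (ℓ - 1) * A = (ℓ - 1) * B * 2 := by rw [hAB]; ring
    omega
  have hj1 : 1 ≤ j := by omega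
  have hfne : f ≠ 0 := by
    intro h
    rw [h, natDegree_zero] at hm
    omega
  have hfm : f.coeff m ≠ 0 := by
    rw [← hm]
    exact mt leadingCoeff_eq_zero.mp hfne
  -- the auxiliary polynomial g
  set g : k[X] := Polynomial.hasseDeriv j f - C (f.coeff j) with hgdef
  have hgcoeff : ∀ d : ℕ, 1 ≤ d →
      g.coeff d = ((d + j).choose j : k) * f.coeff (d + j) := by
    intro d hd
    rw [hgdef, coeff_sub, hasseDeriv_coeff, coeff_C, if_neg (by omega), sub_zero]
  have hgodd : ∀ d : ℕ, d % 2 = 1 → g.coeff d = 0 := by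
    intro d hd
    rw [hgcoeff d (by omega)]
    have hdvd : 2 ∣ (d + j).choose j := two_dvd_choose_of_even_odd (by omega) hjodd
    have : ((d + j).choose j : k) = 0 := (CharP.cast_eq_zero_iff k 2 _).mpr hdvd
    rw [this, zero_mul]
  have hgdeg : g.natDegree ≤ A := by
    refine le_trans (natDegree_sub_le _ _) (max_le ?_ ?_)
    · refine le_trans (natDegree_hasseDeriv_le f j) ?_
      rw [hm]
      omega
    · simp
  have hgtop : g.coeff A ≠ 0 := by
    rw [hgcoeff A (by omega)]
    have h1 : A + j = m := by omega
    rw [h1]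
    have h2 : m.choose j = m.choose A := by
      have : j = m - A := by omega
      rw [this]
      exact Nat.choose_symm (by omega)
    have h3 : (m.choose j : k) ≠ 0 := by
      rw [h2]
      intro hc
      have := (CharP.cast_eq_zero_iff k 2 _).mp hc
      have hodd2 : m.choose A % 2 = 1 := by
        have hm1' : m = 1 + ℓ * 2 ^ s := by rw [hm1, hA, Nat.add_comm]
        rw [hm1', hA]
        exact odd_choose_main hs hℓodd
      omega
    exact mul_ne_zero h3 hfm
  -- the even-part polynomial q with g = expand 2 q
  set q : k[X] := ∑ e ∈ Finset.range (A + 1), monomial e (g.coeff (2 * e)) with hqdef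
  have hqcoeff : ∀ e : ℕ, q.coeff e = if e ≤ A then g.coeff (2 * e) else 0 := by
    intro e
    rw [hqdef, finset_sum_coeff]
    simp only [coeff_monomial]
    rw [Finset.sum_ite_eq' (Finset.range (A + 1)) e (fun x => g.coeff (2 * x))]
    simp [Nat.lt_succ_iff]
  have hexp : Polynomial.expand k 2 q = g := by
    ext d
    rw [coeff_expand two_pos]
    split_ifs with hd
    · obtain ⟨e, rfl⟩ := hd
      rw [Nat.mul_div_cancel_left _ two_pos, hqcoeff]
      split_ifs with he
      · rfl
      · symm
        exact coeff_eq_zero_of_natDegree_lt (lt_of_le_of_lt hgdeg (by omega))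
    · symm
      exact hgodd d (by omega)
  have hq0 : q ≠ 0 := by
    intro hc
    apply hgtop
    have := hqcoeff B
    rw [hc, coeff_zero, if_pos (by omega), ← hAB] at this
    exact this.symm
  have hqdeg : q.natDegree ≤ B := by
    rw [natDegree_le_iff_coeff_eq_zero]
    intro N hN
    rw [hqcoeff]
    split_ifs with hNA
    · exact coeff_eq_zero_of_natDegree_lt (lt_of_le_of_lt hgdeg (by omega))
    · rfl
  -- every element of Sf is a root of q after squaring
  have heval : ∀ y ∈ Sf 2 f, q.IsRoot (y ^ 2) := by
    intro y hy
    obtain ⟨P, hP0, hPQ⟩ := hy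
    set Q : k[X] := f.comp (X + C y) - f - C (f.eval y) with hQdef
    -- the coefficient of Q at j equals g.eval y
    have hQj : Q.coeff j = g.eval y := by
      have e1 : (f.comp (X + C y)).coeff j = (Polynomial.hasseDeriv j f).eval y := by
        rw [← taylor_apply, taylor_coeff]
      rw [hQdef, coeff_sub, coeff_sub, e1, coeff_C, if_neg (by omega), sub_zero,
        hgdef, eval_sub, eval_C]
    -- degree bound on Q
    have hQdeg : Q.natDegree ≤ m - 1 := by
      rw [natDegree_le_iff_coeff_eq_zero]
      intro N hN
      have hNm : m ≤ N := by omega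
      rw [hQdef, coeff_sub, coeff_sub, coeff_C, if_neg (by omega)]
      rcases eq_or_lt_of_le hNm with hNm' | hNm'
      · have e2 : (f.comp (X + C y)).coeff m = f.coeff m := by
          rw [← taylor_apply, taylor_coeff]
          have hd0 : (Polynomial.hasseDeriv m f).natDegree = 0 := by
            have := natDegree_hasseDeriv_le f m
            omega
          rw [eq_C_of_natDegree_eq_zero hd0, eval_C, hasseDeriv_coeff, Nat.zero_add,
            Nat.choose_self, Nat.cast_one, one_mul]
        rw [← hNm', e2, sub_self, sub_zero]
      · have e3 : (f.comp (X + C y)).coeff N = 0 := by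
          rw [← taylor_apply]
          exact coeff_eq_zero_of_natDegree_lt (by rw [natDegree_taylor, hm]; exact hNm')
        rw [e3, coeff_eq_zero_of_natDegree_lt (by rw [hm]; exact hNm'), sub_self, sub_zero]
    -- coefficient of P at j vanishes
    have hP2 : P ^ 2 = (Polynomial.expand k 2 P).map (frobenius k 2) :=
      (Polynomial.map_frobenius_expand 2 P).symm
    have hP2odd : ∀ d : ℕ, d % 2 = 1 → (P ^ 2).coeff d = 0 := by
      intro d hd
      rw [hP2, coeff_map, coeff_expand two_pos, if_neg (by omega), map_zero]
    have hPj : P.coeff j = 0 := by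
      by_cases hP : P = 0
      · rw [hP, coeff_zero]
      by_cases hPe : P.natDegree = 0
      · rw [eq_C_of_natDegree_eq_zero hPe, hP0, map_zero, coeff_zero]
      set e : ℕ := P.natDegree with he
      have hQ2e : Q.coeff (2 * e) ≠ 0 := by
        rw [hPQ, coeff_sub]
        have p1 : P.coeff (2 * e) = 0 :=
          coeff_eq_zero_of_natDegree_lt (by omega)
        have p2 : (P ^ 2).coeff (2 * e) = (P.coeff e) ^ 2 := by
          rw [hP2, coeff_map, coeff_expand two_pos, if_pos ⟨e, rfl⟩,
            Nat.mul_div_cancel_left _ two_pos]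
          rfl
        rw [p1, p2, zero_sub, neg_ne_zero]
        exact pow_ne_zero _ (mt leadingCoeff_eq_zero.mp hP)
      have h2e : 2 * e ≤ m - 1 := le_trans (le_natDegree_of_ne_zero hQ2e) hQdeg
      have heB : e ≤ ℓ * B := by
        have hA2 : ℓ * A = ℓ * B * 2 := by rw [hAB]; ring
        omega
      have hej : e < j := by
        have h4 : ℓ * B ≤ (ℓ - 1) * (2 * B) := by
          have h5 : ℓ ≤ (ℓ - 1) * 2 := by omega
          calc ℓ * B ≤ (ℓ - 1) * 2 * B := Nat.mul_le_mul_right _ h5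
            _ = (ℓ - 1) * (2 * B) := by ring
        rw [hj, hAB]
        omega
      exact coeff_eq_zero_of_natDegree_lt hej
    have hgy : g.eval y = 0 := by
      rw [← hQj, hPQ, coeff_sub, hPj, hP2odd j hjodd, sub_zero]
    have : q.eval (y ^ 2) = g.eval y := by
      rw [← hexp, expand_eval]
    rw [IsRoot, this, hgy]
  -- conclude via roots of q
  have hinj : Function.Injective (fun y : k => y ^ 2) := by
    intro a b hab
    exact frobenius_inj k 2 hab
  have hTfin : Set.Finite {x : k | q.IsRoot x} := finite_setOf_isRoot hq0
  have hsub : Sf 2 f ⊆ (fun y : k => y ^ 2) ⁻¹' {x : k | q.IsRoot x} := by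
    intro y hy
    exact heval y hy
  have hSfin : (Sf 2 f).Finite :=
    Set.Finite.subset (Set.Finite.preimage hinj.injOn hTfin) hsub
  refine ⟨hSfin, ?_⟩
  have hle1 : (Sf 2 f).ncard ≤ {x : k | q.IsRoot x}.ncard :=
    Set.ncard_le_ncard_of_injOn (fun y => y ^ 2) (fun a ha => heval a ha)
      (hinj.injOn) hTfin
  have hset : {x : k | q.IsRoot x} = ↑q.roots.toFinset := by
    ext x
    simp [Finset.mem_coe, Multiset.mem_toFinset, mem_roots hq0, IsRoot]
  have hle2 : {x : k | q.IsRoot x}.ncard ≤ B := by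
    rw [hset, Set.ncard_coe_finset]
    refine le_trans (Multiset.toFinset_card_le _) (le_trans (q.card_roots') hqdeg)
  exact le_trans hle1 hle2
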